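/- For each n ∈ ℕ let Z_n be the set of sequences a ∈ {-1,1}^{2^n} such that: a₁ = −a₂ if n = 1; a₁ = a₂ if n ≠ 1; a_{2^{l−1}+1} = … = a_{2^l} for all l < n; and a_{2^{n−1}+1} = … = a_{2^n−1} = −a_{2^n}. Let U = ⋃_{n∈ℕ} ⋃_{s∈Z_n} ⟨s⟩ ⊆ C. Then U is open but not closed, and U is (2^n, 2^{n+2}/2^{2^n})-balanced for every n ∈ ℕ; in particular U is a balanced Borel subset of C which is not clopen. -/

import Mathlib

open MeasureTheory Set Filter Topology
open scoped ENNReal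

noncomputable section

/-- The Cantor set `{-1,1}^ℕ`, coded with `Bool` (`true ↔ 1`, `false ↔ -1`). -/
abbrev Cantor : Type := ℕ → Bool

/-- `δ_n(x) = x_n ∈ {-1,1}`. -/
def delta (n : ℕ) (x : Cantor) : ℝ := if x n then 1 else -1

/-- The cylinder `⟨s⟩ = {x : x↾m = s}`. -/
def cyl {m : ℕ} (s : Fin m → Bool) : Set Cantor := {x | ∀ i : Fin m, x i.1 = s i}

/-- `φ_n(A) = ∫_A δ_n dμ`. -/
def phi (μ : Measure Cantor) (n : ℕ) (A : Set Cantor) : ℝ := ∫ x in A, delta n x ∂μ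

/-- `μ` is the Haar (fair-coin product) measure on the Cantor set:
every cylinder of length `m` has measure `2^{-m}`. -/
def IsHaar (μ : Measure Cantor) : Prop :=
  ∀ (m : ℕ) (s : Fin m → Bool), μ (cyl s) = (2 : ℝ≥0∞)⁻¹ ^ m

/-- `A` is `(t,ε)`-semibalanced: `|φ_r(A)| < ε/r` for all `r > t`. -/
def Semibalanced (μ : Measure Cantor) (t : ℕ) (ε : ℝ) (A : Set Cantor) : Prop :=
  ∀ r : ℕ, t < r → |phi μ r A| < ε / (r : ℝ)

/-- `A` is `(m,ε)`-balanced. -/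
def BalancedAt (μ : Measure Cantor) (m : ℕ) (ε : ℝ) (A : Set Cantor) : Prop :=
  ∀ s : Fin m → Bool,
    ((μ (A ∩ cyl s)).toReal / (μ (cyl s)).toReal < ε / (m : ℝ) ∨
      (μ (cyl s \ A)).toReal / (μ (cyl s)).toReal < ε / (m : ℝ)) ∧
    ∀ r : ℕ, m < r → |phi μ r (A ∩ cyl s)| / (μ (cyl s)).toReal < ε / (r : ℝ)

/-- `A` is `(m,t,ε)`-balanced. -/
def BalancedAtT (μ : Measure Cantor) (m t : ℕ) (ε : ℝ) (A : Set Cantor) : Prop :=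
  ∀ s : Fin m → Bool,
    ((μ (A ∩ cyl s)).toReal / (μ (cyl s)).toReal < ε / (m : ℝ) ∨
      (μ (cyl s \ A)).toReal / (μ (cyl s)).toReal < ε / (m : ℝ)) ∧
    ∀ r : ℕ, m < r → r ≤ t → |phi μ r (A ∩ cyl s)| / (μ (cyl s)).toReal < ε / (r : ℝ)

/-- `s ∈ Z_n`: the conditions on a sequence `a = (a₁,…,a_{2^n}) ∈ {-1,1}^{2^n}`
(written `0`-indexed, `Bool`-coded): (1) `a₁ = -a₂` if `n = 1`; (2) `a₁ = a₂` if
`n ≠ 1`; (3) for `1 ≤ l < n`, `a_{2^{l-1}+1} = ⋯ = a_{2^l}`;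
(4) `a_{2^{n-1}+1} = ⋯ = a_{2^n-1} = -a_{2^n}`. -/
def inZ (n : ℕ) (s : Fin (2 ^ n) → Bool) : Prop :=
  (n = 1 → ∀ i j : Fin (2 ^ n), i.1 = 0 → j.1 = 1 → s i = ! s j) ∧
  (n ≠ 1 → ∀ i j : Fin (2 ^ n), i.1 = 0 → j.1 = 1 → s i = s j) ∧
  (∀ l : ℕ, 1 ≤ l → l < n → ∀ i j : Fin (2 ^ n),
    2 ^ (l - 1) ≤ i.1 → i.1 < 2 ^ l → 2 ^ (l - 1) ≤ j.1 → j.1 < 2 ^ l → s i = s j) ∧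
  (∀ i j : Fin (2 ^ n), 2 ^ (n - 1) ≤ i.1 → i.1 < 2 ^ n - 1 →
    2 ^ (n - 1) ≤ j.1 → j.1 < 2 ^ n - 1 → s i = s j) ∧
  (∀ i j : Fin (2 ^ n), 2 ^ (n - 1) ≤ i.1 → i.1 < 2 ^ n - 1 → j.1 = 2 ^ n - 1 →
    s i = ! s j)

/-- The open set `U = ⋃_{n≥1} ⋃_{s ∈ Z_n} ⟨s⟩`. -/
def Uset : Set Cantor :=
  ⋃ (n : ℕ) (_ : 1 ≤ n) (s : Fin (2 ^ n) → Bool) (_ : inZ n s), cyl s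

section Basic

lemma measurableSet_cyl {m : ℕ} (s : Fin m → Bool) : MeasurableSet (cyl s) := by
  have : cyl s = ⋂ i : Fin m, (fun x : Cantor => x i.1) ⁻¹' {s i} := by
    ext x; simp [cyl]
  rw [this]
  exact MeasurableSet.iInter fun i =>
    (measurable_pi_apply i.1) (MeasurableSet.singleton (s i))

lemma isOpen_cyl {m : ℕ} (s : Fin m → Bool) : IsOpen (cyl s) := by
  have : cyl s = ⋂ i : Fin m, (fun x : Cantor => x i.1) ⁻¹' {s i} := by
    ext x; simp [cyl]
  rw [this]
  exact isOpen_iInter_of_finite fun i =>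
    (continuous_apply i.1).isOpen_preimage _ (isOpen_discrete _)

lemma isOpen_Uset : IsOpen Uset := by
  refine isOpen_iUnion fun n => isOpen_iUnion fun _ => isOpen_iUnion fun s =>
    isOpen_iUnion fun _ => isOpen_cyl s

lemma measurableSet_Uset : MeasurableSet Uset := by
  refine MeasurableSet.iUnion fun n => MeasurableSet.iUnion fun _ =>
    MeasurableSet.iUnion fun s => MeasurableSet.iUnion fun _ => measurableSet_cyl s

lemma measurable_delta (r : ℕ) : Measurable (delta r) := by
  have : delta r = (fun b : Bool => if b then (1:ℝ) else -1) ∘ (fun x : Cantor => x r) := rfl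
  rw [this]
  exact (measurable_from_top (f := fun b : Bool => if b then (1:ℝ) else -1)).comp
    (measurable_pi_apply r)

end Basic

section Generate

def CylSets : Set (Set Cantor) := {A | ∃ (m : ℕ) (s : Fin m → Bool), A = cyl s}

lemma eval_preimage_singleton (i : ℕ) (b : Bool) :
    (fun x : Cantor => x i) ⁻¹' {b} =
      ⋃ s : {s : Fin (i+1) → Bool // s ⟨i, Nat.lt_succ_self i⟩ = b}, cyl s.1 := by
  ext x
  simp only [Set.mem_preimage, Set.mem_singleton_iff, Set.mem_iUnion]
  constructor
  · intro hx
    exact ⟨⟨fun j => x j.1, hx⟩, fun j => rfl⟩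
  · rintro ⟨⟨s, hs⟩, hxs⟩
    have := hxs ⟨i, Nat.lt_succ_self i⟩
    simp only at this
    rw [this, hs]

lemma generateFrom_cylSets :
    (inferInstance : MeasurableSpace Cantor) = .generateFrom CylSets := by
  apply le_antisymm
  · have heval : ∀ i : ℕ, @Measurable Cantor Bool (.generateFrom CylSets) ⊤ (fun x => x i) := by
      intro i
      refine @measurable_to_countable' Bool Cantor ⊤ _ (.generateFrom CylSets) _ fun b => ?_
      rw [eval_preimage_singleton]
      exact MeasurableSet.iUnion fun s => .basic _ ⟨_, _, rfl⟩
    show MeasurableSpace.pi ≤ _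
    exact iSup_le fun i => measurable_iff_comap_le.1 (heval i)
  · rw [MeasurableSpace.generateFrom_le_iff]
    rintro A ⟨m, s, rfl⟩
    exact measurableSet_cyl s

lemma cyl_inter_of_le {m m' : ℕ} (h : m ≤ m') (s : Fin m → Bool) (t : Fin m' → Bool)
    (hx : (cyl s ∩ cyl t).Nonempty) : cyl s ∩ cyl t = cyl t := by
  obtain ⟨x, hxs, hxt⟩ := hx
  refine Set.inter_eq_right.mpr fun y hy i => ?_
  have h1 : y i.1 = t ⟨i.1, lt_of_lt_of_le i.2 h⟩ := hy ⟨i.1, lt_of_lt_of_le i.2 h⟩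
  have h2 : x i.1 = t ⟨i.1, lt_of_lt_of_le i.2 h⟩ := hxt ⟨i.1, lt_of_lt_of_le i.2 h⟩
  rw [h1, ← h2, hxs i]

lemma isPiSystem_cylSets : IsPiSystem CylSets := by
  rintro A ⟨m, s, rfl⟩ B ⟨m', t, rfl⟩ hne
  rcases le_total m m' with h | h
  · exact ⟨m', t, cyl_inter_of_le h s t hne⟩
  · rw [Set.inter_comm] at hne ⊢
    exact ⟨m, s, cyl_inter_of_le h t s hne⟩

lemma haar_eq {μ ν : Measure Cantor} [IsProbabilityMeasure μ] [IsProbabilityMeasure ν]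
    (hμ : IsHaar μ) (hν : IsHaar ν) : μ = ν := by
  refine ext_of_generate_finite CylSets generateFrom_cylSets isPiSystem_cylSets ?_ (by simp)
  rintro A ⟨m, s, rfl⟩
  rw [hμ, hν]

end Generate

section Flip

/-- Flip the coordinates selected by the mask `c`. -/
def flipMap (c : ℕ → Bool) (x : Cantor) : Cantor := fun i => xor (c i) (x i)

lemma flipMap_involutive (c : ℕ → Bool) : Function.Involutive (flipMap c) := by
  intro x; funext i; simp [flipMap, Bool.xor_assoc]

lemma measurable_flipMap (c : ℕ → Bool) : Measurable (flipMap c) := by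
  rw [measurable_pi_iff]
  intro i
  exact (measurable_from_top (f := fun b : Bool => xor (c i) b)).comp (measurable_pi_apply i)

lemma flipMap_preimage_cyl (c : ℕ → Bool) {m : ℕ} (s : Fin m → Bool) :
    flipMap c ⁻¹' cyl s = cyl fun i : Fin m => xor (c i.1) (s i) := by
  ext x
  simp only [Set.mem_preimage, cyl, Set.mem_setOf_eq, flipMap]
  constructor
  · intro h i
    rw [← h i]
    cases c i.1 <;> simp
  · intro h i
    rw [h i]
    cases c i.1 <;> simp

lemma isHaar_map_flip {μ : Measure Cantor} (hμ : IsHaar μ) (c : ℕ → Bool) :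
    IsHaar (μ.map (flipMap c)) := by
  intro m s
  rw [Measure.map_apply (measurable_flipMap c) (measurableSet_cyl s),
    flipMap_preimage_cyl, hμ]

lemma map_flip_eq {μ : Measure Cantor} [IsProbabilityMeasure μ] (hμ : IsHaar μ)
    (c : ℕ → Bool) : μ.map (flipMap c) = μ := by
  have : IsProbabilityMeasure (μ.map (flipMap c)) :=
    Measure.isProbabilityMeasure_map (measurable_flipMap c).aemeasurable
  exact haar_eq (isHaar_map_flip hμ c) hμ

/-- Flipping a mask that is constant on the dyadic blocks and vanishes at 0 and 1
preserves membership in `Z_n`. -/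
lemma inZ_flip {c : ℕ → Bool} (hc0 : c 0 = false) (hc1 : c 1 = false)
    (hcb : ∀ l i j : ℕ, 2 ^ l ≤ i → i < 2 ^ (l + 1) → 2 ^ l ≤ j → j < 2 ^ (l + 1) →
      c i = c j)
    {n : ℕ} (hn : 1 ≤ n) {s : Fin (2 ^ n) → Bool} (h : inZ n s) :
    inZ n fun i => xor (c i.1) (s i) := by
  obtain ⟨h1, h2, h3, h4, h5⟩ := h
  have hxor : ∀ (a : Bool) {x y : Bool}, x = y → xor a x = xor a y := by
    rintro a x y rfl; rfl
  have hxor' : ∀ (a : Bool) {x y : Bool}, x = !y → xor a x = !(xor a y) := by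
    rintro a x y rfl; cases a <;> cases y <;> rfl
  have hn' : n - 1 + 1 = n := Nat.succ_pred_eq_of_pos hn
  have h1n : (1:ℕ) ≤ 2 ^ (n-1) := Nat.one_le_two_pow
  have h2n : 2 ^ (n-1) * 2 = 2 ^ n := by rw [← pow_succ, hn']
  refine ⟨?_, ?_, ?_, ?_, ?_⟩
  · intro hn1 i j hi hj
    show xor (c i.1) (s i) = !(xor (c j.1) (s j))
    rw [hi, hj, hc0, hc1]
    simpa using h1 hn1 i j hi hj
  · intro hn1 i j hi hj
    show xor (c i.1) (s i) = xor (c j.1) (s j)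
    rw [hi, hj, hc0, hc1]
    simpa using h2 hn1 i j hi hj
  · intro l hl hln i j hi1 hi2 hj1 hj2
    show xor (c i.1) (s i) = xor (c j.1) (s j)
    have hl' : l - 1 + 1 = l := Nat.succ_pred_eq_of_pos hl
    have hc : c i.1 = c j.1 := by
      refine hcb (l - 1) i.1 j.1 hi1 ?_ hj1 ?_ <;> rw [hl'] <;> assumption
    rw [hc]
    exact hxor _ (h3 l hl hln i j hi1 hi2 hj1 hj2)
  · intro i j hi1 hi2 hj1 hj2
    show xor (c i.1) (s i) = xor (c j.1) (s j)
    have hc : c i.1 = c j.1 := by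
      refine hcb (n - 1) i.1 j.1 hi1 ?_ hj1 ?_ <;> rw [hn'] <;> omega
    rw [hc]
    exact hxor _ (h4 i j hi1 hi2 hj1 hj2)
  · intro i j hi1 hi2 hj
    show xor (c i.1) (s i) = !(xor (c j.1) (s j))
    have hc : c i.1 = c j.1 := by
      refine hcb (n - 1) i.1 j.1 hi1 ?_ ?_ ?_ <;> first | (rw [hn']; omega) | omega
    rw [hc]
    exact hxor' _ (h5 i j hi1 hi2 hj)

lemma Uset_subset_flip {c : ℕ → Bool} (hc0 : c 0 = false) (hc1 : c 1 = false)
    (hcb : ∀ l i j : ℕ, 2 ^ l ≤ i → i < 2 ^ (l + 1) → 2 ^ l ≤ j → j < 2 ^ (l + 1) →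
      c i = c j) :
    ∀ x ∈ Uset, flipMap c x ∈ Uset := by
  intro x hx
  simp only [Uset, Set.mem_iUnion] at hx ⊢
  obtain ⟨n, hn, s, hs, hxs⟩ := hx
  refine ⟨n, hn, fun i => xor (c i.1) (s i), inZ_flip hc0 hc1 hcb hn hs, fun i => ?_⟩
  simp only [flipMap]
  rw [hxs i]

lemma Uset_flip_preimage {c : ℕ → Bool} (hc0 : c 0 = false) (hc1 : c 1 = false)
    (hcb : ∀ l i j : ℕ, 2 ^ l ≤ i → i < 2 ^ (l + 1) → 2 ^ l ≤ j → j < 2 ^ (l + 1) →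
      c i = c j) :
    flipMap c ⁻¹' Uset = Uset := by
  ext x
  constructor
  · intro hx
    have := Uset_subset_flip hc0 hc1 hcb _ hx
    rwa [flipMap_involutive c x] at this
  · exact fun hx => Uset_subset_flip hc0 hc1 hcb x hx

end Flip

section Mask

/-- The mask flipping exactly the dyadic block containing `r`. -/
def maskOf (r : ℕ) : ℕ → Bool := fun i => decide (1 ≤ i ∧ Nat.log 2 i = Nat.log 2 r)

lemma maskOf_zero (r : ℕ) : maskOf r 0 = false := by simp [maskOf]

lemma maskOf_one {r : ℕ} (hr : 2 ≤ r) : maskOf r 1 = false := by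
  have h1 : (1:ℕ) ≤ Nat.log 2 r :=
    (Nat.le_log_iff_pow_le one_lt_two (by omega)).2 (by simpa using hr)
  simp only [maskOf, decide_eq_false_iff_not]
  rintro ⟨-, h⟩
  rw [Nat.log_one_right] at h
  omega

lemma maskOf_block (r : ℕ) : ∀ l i j : ℕ, 2 ^ l ≤ i → i < 2 ^ (l + 1) →
    2 ^ l ≤ j → j < 2 ^ (l + 1) → maskOf r i = maskOf r j := by
  intro l i j hi1 hi2 hj1 hj2
  have h1i : 1 ≤ i := le_trans Nat.one_le_two_pow hi1
  have h1j : 1 ≤ j := le_trans Nat.one_le_two_pow hj1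
  have hli : Nat.log 2 i = l := Nat.log_eq_of_pow_le_of_lt_pow hi1 hi2
  have hlj : Nat.log 2 j = l := Nat.log_eq_of_pow_le_of_lt_pow hj1 hj2
  simp [maskOf, hli, hlj, h1i, h1j]

lemma maskOf_lt {n r i : ℕ} (hi : i < 2 ^ n) (hr : 2 ^ n ≤ r) : maskOf r i = false := by
  rcases Nat.eq_zero_or_pos i with rfl | hi1
  · exact maskOf_zero r
  · have h1 : Nat.log 2 i < n := (Nat.log_lt_iff_lt_pow one_lt_two (by omega)).2 hi
    have h2 : n ≤ Nat.log 2 r := (Nat.le_log_iff_pow_le one_lt_two (by omega)).2 hr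
    simp only [maskOf, decide_eq_false_iff_not]
    rintro ⟨-, h⟩
    omega

lemma maskOf_self {r : ℕ} (hr : 1 ≤ r) : maskOf r r = true := by
  simp [maskOf, hr]

lemma cyl_flip_eq {n r : ℕ} (hr : 2 ^ n ≤ r) (s : Fin (2 ^ n) → Bool) :
    flipMap (maskOf r) ⁻¹' cyl s = cyl s := by
  rw [flipMap_preimage_cyl]
  have : (fun i : Fin (2 ^ n) => xor (maskOf r i.1) (s i)) = s := by
    funext i
    rw [maskOf_lt i.2 hr]
    simp
  rw [this]

lemma phi_zero {μ : Measure Cantor} [IsProbabilityMeasure μ] (hμ : IsHaar μ) {n : ℕ}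
    (hn : 1 ≤ n) (s : Fin (2 ^ n) → Bool) {r : ℕ} (hr : 2 ^ n < r) :
    phi μ r (Uset ∩ cyl s) = 0 := by
  have h2n : (2:ℕ) ≤ 2 ^ n := by
    calc (2:ℕ) = 2 ^ 1 := rfl
    _ ≤ 2 ^ n := Nat.pow_le_pow_right (by norm_num) hn
  have hr2 : 2 ≤ r := by omega
  set c := maskOf r with hc
  have hA : MeasurableSet (Uset ∩ cyl s) := measurableSet_Uset.inter (measurableSet_cyl s)
  have hpre : flipMap c ⁻¹' (Uset ∩ cyl s) = Uset ∩ cyl s := by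
    rw [Set.preimage_inter,
      Uset_flip_preimage (maskOf_zero r) (maskOf_one hr2) (maskOf_block r),
      cyl_flip_eq (le_of_lt hr) s]
  have hflip : ∀ x : Cantor, delta r (flipMap c x) = - delta r x := by
    intro x
    have hcr : c r = true := maskOf_self (by omega)
    simp only [delta, flipMap, hcr]
    cases x r <;> simp
  have key : phi μ r (Uset ∩ cyl s) = - phi μ r (Uset ∩ cyl s) := by
    unfold phi
    conv_lhs => rw [← map_flip_eq hμ c]
    rw [setIntegral_map hA (measurable_delta r).aestronglyMeasurable
      (measurable_flipMap c).aemeasurable, hpre]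
    simp_rw [hflip]
    exact integral_neg _
  linarith

end Mask

section Template

/-- The candidate element of `Z_{n+k+1}` extending `s` with block values `g`. -/
def tmpl (n k : ℕ) (s : Fin (2 ^ n) → Bool) (g : Fin (k + 1) → Bool) :
    Fin (2 ^ (n + k + 1)) → Bool := fun i =>
  if h : i.1 < 2 ^ n then s ⟨i.1, h⟩
  else if i.1 = 2 ^ (n + k + 1) - 1 then ! g ⟨k, Nat.lt_succ_self k⟩
  else g ⟨min (Nat.log 2 i.1 - n) k, by omega⟩

lemma tmpl_eq {n k : ℕ} (hn : 1 ≤ n) {t : Fin (2 ^ (n + k + 1)) → Bool}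
    (ht : inZ (n + k + 1) t) {s : Fin (2 ^ n) → Bool}
    (hts : ∀ i : Fin (2 ^ n),
      t ⟨i.1, lt_of_lt_of_le i.2 (Nat.pow_le_pow_right (by norm_num) (by omega))⟩ = s i) :
    t = tmpl n k s fun j =>
      t ⟨2 ^ (n + j.1), Nat.pow_lt_pow_right one_lt_two (by omega)⟩ := by
  obtain ⟨h1, h2, h3, h4, h5⟩ := ht
  funext i
  by_cases hlt : i.1 < 2 ^ n
  · simp only [tmpl]
    rw [dif_pos hlt]
    exact hts ⟨i.1, hlt⟩
  · push_neg at hlt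
    have hi0 : i.1 ≠ 0 := by
      have : (1:ℕ) ≤ 2 ^ n := Nat.one_le_two_pow
      omega
    have hi2 : i.1 < 2 ^ (n + k + 1) := i.2
    set L := Nat.log 2 i.1 with hL
    have hL1 : 2 ^ L ≤ i.1 := Nat.pow_log_le_self 2 hi0
    have hL2 : i.1 < 2 ^ (L + 1) := Nat.lt_pow_succ_log_self one_lt_two _
    have hnL : n ≤ L := (Nat.le_log_iff_pow_le one_lt_two hi0).2 hlt
    have hLn' : L < n + k + 1 := (Nat.log_lt_iff_lt_pow one_lt_two hi0).2 i.2
    have hpow1 : (2:ℕ) ^ (n + k) * 2 = 2 ^ (n + k + 1) := by rw [← pow_succ]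
    have h2nk : (2:ℕ) ≤ 2 ^ (n + k) := by
      calc (2:ℕ) = 2 ^ 1 := rfl
      _ ≤ 2 ^ (n + k) := Nat.pow_le_pow_right (by norm_num) (by omega)
    have epred : (2:ℕ) ^ (n + k + 1 - 1) = 2 ^ (n + k) := by congr 1
    by_cases hlast : i.1 = 2 ^ (n + k + 1) - 1
    · simp only [tmpl]
      rw [dif_neg (by omega), if_pos hlast]
      have h5' := h5 ⟨2 ^ (n + k), by omega⟩ i
        (show 2 ^ (n + k + 1 - 1) ≤ 2 ^ (n + k) by omega)
        (show 2 ^ (n + k) < 2 ^ (n + k + 1) - 1 by omega) hlast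
      rw [h5', Bool.not_not]
    · simp only [tmpl]
      rw [dif_neg (by omega), if_neg hlast]
      have hexp : n + min (Nat.log 2 i.1 - n) k = L := by rw [← hL]; omega
      have hrep : (⟨2 ^ (n + min (Nat.log 2 i.1 - n) k), by
            refine Nat.pow_lt_pow_right one_lt_two ?_
            omega⟩ : Fin (2 ^ (n + k + 1))) =
          ⟨2 ^ L, Nat.pow_lt_pow_right one_lt_two hLn'⟩ :=
        Fin.ext (by simp only; rw [hexp])
      show t i = t _
      rw [hrep]
      by_cases hLtop : L = n + k
      · have e : (2:ℕ) ^ (n + k + 1 - 1) = 2 ^ L := by congr 1; omega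
        exact h4 i ⟨2 ^ L, Nat.pow_lt_pow_right one_lt_two hLn'⟩
          (by omega) (by omega)
          (show 2 ^ (n + k + 1 - 1) ≤ 2 ^ L by omega)
          (show 2 ^ L < 2 ^ (n + k + 1) - 1 by omega)
      · have e2 : (2:ℕ) ^ (L + 1 - 1) = 2 ^ L := by congr 1
        have hpL : (2:ℕ) ^ L * 2 = 2 ^ (L + 1) := by rw [← pow_succ]
        exact h3 (L + 1) (by omega) (by omega) i
          ⟨2 ^ L, Nat.pow_lt_pow_right one_lt_two hLn'⟩
          (by omega) (by omega)
          (show 2 ^ (L + 1 - 1) ≤ 2 ^ L by omega)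
          (show 2 ^ L < 2 ^ (L + 1) by omega)

end Template

section MeasureBound

lemma pow_mul_inv_pow (a b : ℕ) (h : a ≤ b) :
    (2:ℝ≥0∞) ^ a * (2⁻¹) ^ b = (2⁻¹) ^ (b - a) := by
  have h1 : (2:ℝ≥0∞) ^ a * (2⁻¹) ^ a = 1 := by
    rw [← mul_pow, ENNReal.mul_inv_cancel (by norm_num) (by norm_num), one_pow]
  calc (2:ℝ≥0∞) ^ a * (2⁻¹) ^ b
      = (2:ℝ≥0∞) ^ a * ((2⁻¹) ^ a * (2⁻¹) ^ (b - a)) := by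
        rw [← pow_add, Nat.add_sub_cancel' h]
    _ = ((2:ℝ≥0∞) ^ a * (2⁻¹) ^ a) * (2⁻¹) ^ (b - a) := by ring
    _ = (2⁻¹) ^ (b - a) := by rw [h1, one_mul]

lemma inv_pow_le_inv_pow {e c : ℕ} (h : e ≤ c) : (2⁻¹:ℝ≥0∞) ^ c ≤ (2⁻¹) ^ e :=
  pow_le_pow_of_le_one (by simp) (ENNReal.inv_le_one.2 one_le_two) h

lemma series_bound (n : ℕ) (hn : 1 ≤ n) :
    (∑' k : ℕ, (2:ℝ≥0∞) ^ (k + 1) * (2⁻¹) ^ (2 ^ (n + k + 1))) ≤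
      3 * (2⁻¹) ^ (2 ^ (n + 1)) := by
  classical
  set X : ℝ≥0∞ := (2⁻¹) ^ (2 ^ (n + 1)) with hX
  set f : ℕ → ℝ≥0∞ := fun k => (2:ℝ≥0∞) ^ (k + 1) * (2⁻¹) ^ (2 ^ (n + k + 1)) with hf
  have hXne : X ≠ ∞ := by
    rw [hX]
    exact ENNReal.pow_ne_top (by simp)
  have hsplit : ∑' k, f k = f 0 + ∑' k, ite (k = 0) 0 (f k) :=
    ENNReal.summable.tsum_eq_add_tsum_ite' 0
  have hf0 : f 0 = 2 * X := by
    rw [hf, hX]; norm_num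
  have hterm : ∀ k : ℕ, ite (k = 0) (0:ℝ≥0∞) (f k) ≤ ite (k = 0) 0 (X * (2⁻¹) ^ k) := by
    intro k
    rcases Nat.eq_zero_or_pos k with rfl | hk
    · simp
    · rw [if_neg (by omega), if_neg (by omega)]
      have e1 : (2:ℕ) ^ (n + 1) * 2 ^ k = 2 ^ (n + k + 1) := by
        rw [← pow_add]; congr 1; omega
      have e2 : (4:ℕ) ≤ 2 ^ (n + 1) := by
        calc (4:ℕ) = 2 ^ 2 := rfl
        _ ≤ 2 ^ (n + 1) := Nat.pow_le_pow_right (by norm_num) (by omega)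
      have e3 : k + 1 ≤ 2 ^ k := Nat.lt_two_pow_self (n := k)
      have e6 : 4 * 2 ^ k ≤ 2 ^ (n + 1) * 2 ^ k := Nat.mul_le_mul_right _ e2
      have e7 : 2 ^ (n + 1) * 2 ≤ 2 ^ (n + 1) * 2 ^ k :=
        Nat.mul_le_mul_left _ (by omega)
      calc f k = (2⁻¹:ℝ≥0∞) ^ (2 ^ (n + k + 1) - (k + 1)) :=
            pow_mul_inv_pow _ _ (by omega)
        _ ≤ (2⁻¹:ℝ≥0∞) ^ (2 ^ (n + 1) + k) := inv_pow_le_inv_pow (by omega)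
        _ = X * (2⁻¹) ^ k := by rw [hX, pow_add]
  have hgeom : ∑' k : ℕ, X * (2⁻¹:ℝ≥0∞) ^ k = X * 2 := by
    rw [ENNReal.tsum_mul_left, ENNReal.tsum_geometric, ENNReal.one_sub_inv_two, inv_inv]
  have hsplit2 : ∑' k : ℕ, X * (2⁻¹:ℝ≥0∞) ^ k =
      X * (2⁻¹) ^ 0 + ∑' k, ite (k = 0) 0 (X * (2⁻¹:ℝ≥0∞) ^ k) :=
    ENNReal.summable.tsum_eq_add_tsum_ite' 0
  have hS : ∑' k, ite (k = 0) 0 (X * (2⁻¹:ℝ≥0∞) ^ k) = X := by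
    have h1 : X * 2 = X + ∑' k, ite (k = 0) 0 (X * (2⁻¹:ℝ≥0∞) ^ k) := by
      rw [← hgeom, hsplit2]; norm_num
    have h2 : X + X = X + ∑' k, ite (k = 0) 0 (X * (2⁻¹:ℝ≥0∞) ^ k) := by
      rw [← h1, mul_two]
    exact ((ENNReal.add_right_inj hXne).1 h2).symm
  calc ∑' k, f k = f 0 + ∑' k, ite (k = 0) 0 (f k) := hsplit
    _ ≤ 2 * X + ∑' k, ite (k = 0) 0 (X * (2⁻¹:ℝ≥0∞) ^ k) := by
        rw [hf0]
        exact add_le_add_right (ENNReal.tsum_le_tsum hterm) _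
    _ = 2 * X + X := by rw [hS]
    _ = 3 * X := by ring

lemma measure_Uset_inter_cyl_le {μ : Measure Cantor} (hμ : IsHaar μ) {n : ℕ}
    (hn : 1 ≤ n) {s : Fin (2 ^ n) → Bool} (hns : ¬ cyl s ⊆ Uset) :
    μ (Uset ∩ cyl s) ≤ 3 * (2⁻¹ : ℝ≥0∞) ^ (2 ^ (n + 1)) := by
  have hsub : Uset ∩ cyl s ⊆
      ⋃ (k : ℕ) (g : Fin (k + 1) → Bool), cyl (tmpl n k s g) := by
    rintro x ⟨hxU, hxs⟩
    simp only [Uset, Set.mem_iUnion] at hxU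
    obtain ⟨n', hn', t, ht, hxt⟩ := hxU
    have hnn' : n < n' := by
      by_contra hle
      push_neg at hle
      refine hns fun y hy => ?_
      have hsubcyl : y ∈ cyl t := by
        intro i
        have hi : i.1 < 2 ^ n :=
          lt_of_lt_of_le i.2 (Nat.pow_le_pow_right (by norm_num) hle)
        have h1 : y i.1 = s ⟨i.1, hi⟩ := hy ⟨i.1, hi⟩
        have h2 : x i.1 = s ⟨i.1, hi⟩ := hxs ⟨i.1, hi⟩
        rw [h1, ← h2, hxt i]
      simp only [Uset, Set.mem_iUnion]
      exact ⟨n', hn', t, ht, hsubcyl⟩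
    obtain ⟨k, rfl⟩ : ∃ k, n' = n + k + 1 := ⟨n' - n - 1, by omega⟩
    have hts : ∀ i : Fin (2 ^ n),
        t ⟨i.1, lt_of_lt_of_le i.2 (Nat.pow_le_pow_right (by norm_num) (by omega))⟩
          = s i := by
      intro i
      rw [← hxt ⟨i.1, _⟩]
      exact hxs i
    have hteq := tmpl_eq hn ht hts
    simp only [Set.mem_iUnion]
    refine ⟨k, fun j => t ⟨2 ^ (n + j.1), Nat.pow_lt_pow_right one_lt_two (by omega)⟩, ?_⟩
    rw [← hteq]
    exact hxt
  calc μ (Uset ∩ cyl s)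
      ≤ μ (⋃ (k : ℕ) (g : Fin (k + 1) → Bool), cyl (tmpl n k s g)) := measure_mono hsub
    _ ≤ ∑' k : ℕ, μ (⋃ g : Fin (k + 1) → Bool, cyl (tmpl n k s g)) := measure_iUnion_le _
    _ ≤ ∑' k : ℕ, (2:ℝ≥0∞) ^ (k + 1) * (2⁻¹) ^ (2 ^ (n + k + 1)) := by
        refine ENNReal.tsum_le_tsum fun k => ?_
        calc μ (⋃ g : Fin (k + 1) → Bool, cyl (tmpl n k s g))
            ≤ ∑' g : Fin (k + 1) → Bool, μ (cyl (tmpl n k s g)) := measure_iUnion_le _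
          _ = ∑' _ : Fin (k + 1) → Bool, (2⁻¹:ℝ≥0∞) ^ (2 ^ (n + k + 1)) := by
              congr 1; funext g; exact hμ _ _
          _ = (2:ℝ≥0∞) ^ (k + 1) * (2⁻¹) ^ (2 ^ (n + k + 1)) := by
              rw [tsum_fintype, Finset.sum_const, nsmul_eq_mul]
              congr 1
              simp [Fintype.card_fun]
    _ ≤ 3 * (2⁻¹ : ℝ≥0∞) ^ (2 ^ (n + 1)) := series_bound n hn

end MeasureBound

section Final

lemma toReal_inv_two_pow (e : ℕ) : ((2⁻¹ : ℝ≥0∞) ^ e).toReal = (2⁻¹ : ℝ) ^ e := by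
  rw [ENNReal.toReal_pow, ENNReal.toReal_inv]
  norm_num

lemma balancedAt_Uset {μ : Measure Cantor} [IsProbabilityMeasure μ] (hμ : IsHaar μ)
    {n : ℕ} (hn : 1 ≤ n) :
    BalancedAt μ (2 ^ n) ((2:ℝ) ^ (n + 2) / 2 ^ (2 ^ n)) Uset := by
  intro s
  have h12 : (1:ℕ) ≤ 2 ^ n := Nat.one_le_two_pow
  have hYe : (μ (cyl s)).toReal = (2⁻¹:ℝ) ^ (2 ^ n) := by
    rw [hμ]; exact toReal_inv_two_pow _
  have hYpos : (0:ℝ) < (2⁻¹:ℝ) ^ (2 ^ n) := by positivity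
  have hmpos : (0:ℝ) < ((2 ^ n : ℕ) : ℝ) := by positivity
  constructor
  · by_cases hsub : cyl s ⊆ Uset
    · right
      rw [Set.diff_eq_empty.mpr hsub, measure_empty]
      simp only [ENNReal.toReal_zero, zero_div]
      positivity
    · left
      have hb := measure_Uset_inter_cyl_le hμ hn hsub
      have hfin : (3 * (2⁻¹:ℝ≥0∞) ^ (2 ^ (n + 1))) ≠ ∞ :=
        ENNReal.mul_ne_top (by norm_num) (ENNReal.pow_ne_top (ENNReal.inv_ne_top.2 (by norm_num)))
      have htR : (μ (Uset ∩ cyl s)).toReal ≤ 3 * (2⁻¹:ℝ) ^ (2 ^ (n + 1)) := by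
        have := ENNReal.toReal_mono hfin hb
        rwa [ENNReal.toReal_mul, ENNReal.toReal_ofNat, toReal_inv_two_pow] at this
      have key : (3:ℝ) * (2⁻¹) ^ (2 ^ (n + 1)) <
          (2:ℝ) ^ (n + 2) / 2 ^ (2 ^ n) / ((2 ^ n : ℕ) : ℝ) * (2⁻¹) ^ (2 ^ n) := by
        have h1 : ((2 ^ n : ℕ) : ℝ) = (2:ℝ) ^ n := by push_cast; ring
        have h3 : (2⁻¹:ℝ) ^ (2 ^ (n + 1)) = ((2⁻¹:ℝ) ^ (2 ^ n)) ^ 2 := by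
          rw [← pow_mul]
          congr 1
        have h2 : (2:ℝ) ^ (n + 2) / 2 ^ (2 ^ n) / (2:ℝ) ^ n * (2⁻¹) ^ (2 ^ n) =
            4 * ((2⁻¹:ℝ) ^ (2 ^ n)) ^ 2 := by
          have e1 : (2:ℝ) ^ (n + 2) = 4 * 2 ^ n := by rw [pow_add]; ring
          have e2 : (2⁻¹:ℝ) ^ (2 ^ n) = ((2:ℝ) ^ (2 ^ n))⁻¹ := by rw [inv_pow]
          have e3 : (0:ℝ) < (2:ℝ) ^ (2 ^ n) := by positivity
          have e4 : (0:ℝ) < (2:ℝ) ^ n := by positivity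
          rw [e1, e2]
          field_simp
        rw [h1, h2, h3]
        have hpos2 : (0:ℝ) < ((2⁻¹:ℝ) ^ (2 ^ n)) ^ 2 := by positivity
        linarith
      rw [hYe, div_lt_iff₀ hYpos]
      exact lt_of_le_of_lt htR key
  · intro r hr
    rw [phi_zero hμ hn s hr, abs_zero, zero_div]
    have hrpos : (0:ℝ) < (r:ℝ) := by
      have : 0 < r := by omega
      exact_mod_cast this
    apply div_pos (by positivity) hrpos

lemma not_closed_Uset : ¬ IsClosed Uset := by
  intro h
  set xT : Cantor := fun _ => true with hxT
  have hnot : xT ∉ Uset := by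
    intro hmem
    simp only [Uset, Set.mem_iUnion] at hmem
    obtain ⟨n, hn, s, ⟨h1, h2, h3, h4, h5⟩, hxs⟩ := hmem
    have hs : ∀ i, s i = true := fun i => (hxs i).symm
    have h2le : (2:ℕ) ≤ 2 ^ n := by
      calc (2:ℕ) = 2 ^ 1 := rfl
      _ ≤ 2 ^ n := Nat.pow_le_pow_right (by norm_num) hn
    rcases eq_or_ne n 1 with h1n | h2n
    · have := h1 h1n ⟨0, by omega⟩ ⟨1, by omega⟩ rfl rfl
      rw [hs, hs] at this
      simp at this
    · have hp : (2:ℕ) ^ (n - 1) * 2 = 2 ^ n := by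
        rw [← pow_succ]
        congr 1
        omega
      have hq : (2:ℕ) ≤ 2 ^ (n - 1) := by
        calc (2:ℕ) = 2 ^ 1 := rfl
        _ ≤ 2 ^ (n - 1) := Nat.pow_le_pow_right (by norm_num) (by omega)
      have := h5 ⟨2 ^ (n - 1), by omega⟩ ⟨2 ^ n - 1, by omega⟩
        (show 2 ^ (n - 1) ≤ 2 ^ (n - 1) from le_rfl)
        (show 2 ^ (n - 1) < 2 ^ n - 1 by omega)
        (show 2 ^ n - 1 = 2 ^ n - 1 from rfl)
      rw [hs, hs] at this
      simp at this
  have hUin : ∀ N : ℕ,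
      (fun i => if i = 2 ^ (N + 1) - 1 then false else true : Cantor) ∈ Uset := by
    intro N
    have hp : (2:ℕ) ^ N * 2 = 2 ^ (N + 1) := by rw [← pow_succ]
    have hq : (1:ℕ) ≤ 2 ^ N := Nat.one_le_two_pow
    simp only [Uset, Set.mem_iUnion]
    refine ⟨N + 1, by omega,
      fun i : Fin (2 ^ (N + 1)) => if i.1 = 2 ^ (N + 1) - 1 then false else true,
      ?_, fun i => rfl⟩
    refine ⟨?_, ?_, ?_, ?_, ?_⟩
    · intro hn1 i j hi hj
      show (if i.1 = 2 ^ (N + 1) - 1 then false else true) =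
        !(if j.1 = 2 ^ (N + 1) - 1 then false else true)
      have e : (2:ℕ) ^ (N + 1) = 2 := by rw [hn1, pow_one]
      rw [if_neg (by omega), if_pos (by omega)]
      rfl
    · intro hn1 i j hi hj
      show (if i.1 = 2 ^ (N + 1) - 1 then false else true) =
        (if j.1 = 2 ^ (N + 1) - 1 then false else true)
      have hN1 : 1 ≤ N := by omega
      have e : (4:ℕ) ≤ 2 ^ (N + 1) := by
        calc (4:ℕ) = 2 ^ 2 := rfl
        _ ≤ 2 ^ (N + 1) := Nat.pow_le_pow_right (by norm_num) (by omega)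
      rw [if_neg (by omega), if_neg (by omega)]
    · intro l hl hln i j hi1 hi2 hj1 hj2
      show (if i.1 = 2 ^ (N + 1) - 1 then false else true) =
        (if j.1 = 2 ^ (N + 1) - 1 then false else true)
      have e : (2:ℕ) ^ l ≤ 2 ^ N := Nat.pow_le_pow_right (by norm_num) (by omega)
      rw [if_neg (by omega), if_neg (by omega)]
    · intro i j hi1 hi2 hj1 hj2
      show (if i.1 = 2 ^ (N + 1) - 1 then false else true) =
        (if j.1 = 2 ^ (N + 1) - 1 then false else true)
      rw [if_neg (by omega), if_neg (by omega)]
    · intro i j hi1 hi2 hj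
      show (if i.1 = 2 ^ (N + 1) - 1 then false else true) =
        !(if j.1 = 2 ^ (N + 1) - 1 then false else true)
      rw [if_neg (by omega), if_pos (by omega)]
      rfl
  have hconv : Filter.Tendsto
      (fun N : ℕ => (fun i => if i = 2 ^ (N + 1) - 1 then false else true : Cantor))
      atTop (nhds xT) := by
    rw [tendsto_pi_nhds]
    intro i
    refine Filter.Tendsto.congr' ?_ (tendsto_const_nhds (x := true))
    filter_upwards [Filter.eventually_ge_atTop (i + 1)] with N hN
    have hpow : N + 1 < 2 ^ (N + 1) := Nat.lt_two_pow_self (n := N + 1)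
    have : i ≠ 2 ^ (N + 1) - 1 := by omega
    rw [if_neg this]
  have hclosure : xT ∈ Uset := by
    rw [← h.closure_eq]
    exact mem_closure_of_tendsto hconv (Filter.Eventually.of_forall hUin)
  exact hnot hclosure

lemma exists_balancedAt {μ : Measure Cantor} [IsProbabilityMeasure μ] (hμ : IsHaar μ)
    (ε : ℝ) (hε : 0 < ε) : ∃ m : ℕ, BalancedAt μ m ε Uset := by
  obtain ⟨N, hN⟩ := exists_nat_one_div_lt hε
  set n := N + 5 with hn
  have hnat : 2 ^ (n + 2) * (N + 1) ≤ 2 ^ (2 ^ n) := by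
    have e0 : (2:ℕ) ^ (n - 2) * 4 = 2 ^ n := by
      have h : n - 2 + 2 = n := by omega
      calc (2:ℕ) ^ (n - 2) * 4 = 2 ^ (n - 2) * 2 ^ 2 := rfl
        _ = 2 ^ (n - 2 + 2) := (pow_add 2 (n - 2) 2).symm
        _ = 2 ^ n := by rw [h]
    have e1 : n - 2 < 2 ^ (n - 2) := Nat.lt_two_pow_self (n := n - 2)
    have e2 : 2 * n + 2 ≤ 2 ^ n := by omega
    have e3 : (2:ℕ) ^ (2 * n + 2) ≤ 2 ^ (2 ^ n) := Nat.pow_le_pow_right (by norm_num) e2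
    have e4 : (2:ℕ) ^ (n + 2) * 2 ^ n = 2 ^ (2 * n + 2) := by
      rw [← pow_add]
      congr 1
      omega
    have e5 : n < 2 ^ n := Nat.lt_two_pow_self (n := n)
    have e6 : (2:ℕ) ^ (n + 2) * (N + 1) ≤ 2 ^ (n + 2) * 2 ^ n :=
      Nat.mul_le_mul_left _ (by omega)
    omega
  have hble : (2:ℝ) ^ (n + 2) / 2 ^ (2 ^ n) ≤ 1 / ((N:ℝ) + 1) := by
    rw [div_le_div_iff₀ (by positivity) (by positivity)]
    rw [one_mul]
    calc (2:ℝ) ^ (n + 2) * ((N:ℝ) + 1) = (((2 ^ (n + 2) * (N + 1) : ℕ)):ℝ) := by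
          push_cast; ring
      _ ≤ (((2 ^ (2 ^ n) : ℕ)):ℝ) := by exact_mod_cast hnat
      _ = (2:ℝ) ^ (2 ^ n) := by push_cast; ring
  have hεle : (2:ℝ) ^ (n + 2) / 2 ^ (2 ^ n) ≤ ε := le_of_lt (lt_of_le_of_lt hble hN)
  refine ⟨2 ^ n, fun s => ?_⟩
  obtain ⟨hA, hB⟩ := balancedAt_Uset hμ (show 1 ≤ n by omega) s
  have hmpos : (0:ℝ) < ((2 ^ n : ℕ) : ℝ) := by positivity
  constructor
  · have hdiv : (2:ℝ) ^ (n + 2) / 2 ^ (2 ^ n) / ((2 ^ n : ℕ) : ℝ) ≤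
        ε / ((2 ^ n : ℕ) : ℝ) := by gcongr
    rcases hA with hA | hA
    · exact Or.inl (lt_of_lt_of_le hA hdiv)
    · exact Or.inr (lt_of_lt_of_le hA hdiv)
  · intro r hr
    have hrpos : (0:ℝ) < (r:ℝ) := by
      have h12 : (1:ℕ) ≤ 2 ^ n := Nat.one_le_two_pow
      have : 0 < r := by omega
      exact_mod_cast this
    refine lt_of_lt_of_le (hB r hr) ?_
    gcongr

end Final

/-- `U` is open but not closed, and `(2^n, 2^{n+2}/2^{2^n})`-balanced for every
`n ≥ 1`; in particular `U` is a balanced Borel set which is not clopen. -/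
theorem stmt17 (μ : Measure Cantor) [IsProbabilityMeasure μ] (hμ : IsHaar μ) :
    IsOpen Uset ∧ ¬ IsClosed Uset ∧
    (∀ n : ℕ, 1 ≤ n →
      BalancedAt μ (2 ^ n) ((2 : ℝ) ^ (n + 2) / 2 ^ (2 ^ n)) Uset) ∧
    (∀ ε : ℝ, 0 < ε → ∃ m : ℕ, BalancedAt μ m ε Uset) ∧
    MeasurableSet Uset ∧ ¬ IsClopen Uset :=
  ⟨isOpen_Uset, not_closed_Uset, fun _ hn => balancedAt_Uset hμ hn,
    fun ε hε => exists_balancedAt hμ ε hε, measurableSet_Uset,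
    fun h => not_closed_Uset h.1⟩
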